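/- In an oriented complete multipartite graph, if every 4-vertex cycle is evenly-oriented, then any two vertices in the same partite set are uniform twins or opposite twins. -/

import Mathlib

/-- S is the skew-adjacency matrix of some oriented graph: it is skew-symmetric
with entries in {0, 1, -1}. -/
def IsSkewAdjacency {V : Type} [Fintype V] [DecidableEq V] (S : Matrix V V ℝ) : Prop :=
  S.transpose = -S ∧ ∀ i j : V, S i j = 0 ∨ S i j = 1 ∨ S i j = -1

/-- S is the skew-adjacency matrix of an orientation of the simple graph G. -/
def IsSkewAdjacencyOf {V : Type} [Fintype V] [DecidableEq V]
    (S : Matrix V V ℝ) (G : SimpleGraph V) : Prop :=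
  IsSkewAdjacency S ∧ ∀ i j : V, S i j ≠ 0 ↔ G.Adj i j

private lemma sign_lemma_neg {a b : ℝ} (ha : a = 1 ∨ a = -1) (hb : b = 1 ∨ b = -1)
    (h : a * b < 0) : a = -b := by
  rcases ha with ha | ha <;> rcases hb with hb | hb <;> subst ha <;> subst hb <;> revert h <;> norm_num

/-- In an oriented complete multipartite graph in which every 4-vertex cycle is
evenly-oriented, any two vertices in the same partite set are uniform or
opposite twins. -/
theorem twins_of_evenly_oriented_complete_multipartite
    {V : Type} [Fintype V] [DecidableEq V] {ι : Type} (p : V → ι)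
    (S : Matrix V V ℝ) (hS : IsSkewAdjacency S)
    (hadj : ∀ i j : V, S i j ≠ 0 ↔ p i ≠ p j)
    (heven : ∀ a b c d : V, S a b ≠ 0 → S b c ≠ 0 → S c d ≠ 0 → S d a ≠ 0 →
      a ≠ c → b ≠ d → 0 < S a b * S b c * S c d * S d a) :
    ∀ u v : V, u ≠ v → p u = p v →
      (∀ w : V, S u w = S v w) ∨ (∀ w : V, S u w = -S v w) := by
  intro u v huv hpuv
  obtain ⟨hskew, hval⟩ := hS
  have hsk : ∀ i j : V, S j i = -S i j := by
    intro i j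
    have := congrFun (congrFun hskew i) j
    simpa [Matrix.transpose_apply] using this
  have hzero : ∀ w : V, p w = p u → S u w = 0 ∧ S v w = 0 := by
    intro w hw
    constructor
    · by_contra h; exact (hadj u w).mp h hw.symm
    · by_contra h; exact (hadj v w).mp h (by rw [← hpuv, hw])
  -- values for adjacent w
  have hvalu : ∀ w : V, p w ≠ p u → (S u w = 1 ∨ S u w = -1) := by
    intro w hw
    have hne : S u w ≠ 0 := (hadj u w).mpr (fun h => hw h.symm)
    rcases hval u w with h | h | h
    · exact absurd h hne
    · exact Or.inl h
    · exact Or.inr h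
  have hvalv : ∀ w : V, p w ≠ p u → (S v w = 1 ∨ S v w = -1) := by
    intro w hw
    have hne : S v w ≠ 0 := (hadj v w).mpr (fun h => hw (hpuv ▸ h.symm))
    rcases hval v w with h | h | h
    · exact absurd h hne
    · exact Or.inl h
    · exact Or.inr h
  -- key sign consistency
  have hkey : ∀ w1 w2 : V, p w1 ≠ p u → p w2 ≠ p u → w1 ≠ w2 →
      0 < (S u w1 * S v w1) * (S u w2 * S v w2) := by
    intro w1 w2 h1 h2 h12
    have a1 : S w1 u ≠ 0 := (hadj w1 u).mpr h1
    have a2 : S u w2 ≠ 0 := (hadj u w2).mpr (fun h => h2 h.symm)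
    have a3 : S w2 v ≠ 0 := (hadj w2 v).mpr (fun h => h2 (h.trans hpuv.symm))
    have a4 : S v w1 ≠ 0 := (hadj v w1).mpr (fun h => h1 (hpuv ▸ h.symm))
    have h := heven w1 u w2 v a1 a2 a3 a4 h12 huv
    have e1 : S w1 u = -S u w1 := hsk u w1
    have e2 : S w2 v = -S v w2 := hsk v w2
    rw [e1, e2] at h
    nlinarith [h]
  by_cases hall : ∀ w : V, S u w = S v w
  · exact Or.inl hall
  · right
    push_neg at hall
    obtain ⟨w0, hw0⟩ := hall
    have hpw0 : p w0 ≠ p u := by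
      intro h
      obtain ⟨h1, h2⟩ := hzero w0 h
      exact hw0 (h1.trans h2.symm)
    have hw0neg : S u w0 = -S v w0 := by
      rcases hvalu w0 hpw0 with h1 | h1 <;> rcases hvalv w0 hpw0 with h2 | h2 <;>
        simp [h1, h2] at hw0 ⊢
    intro w
    by_cases hpw : p w = p u
    · obtain ⟨h1, h2⟩ := hzero w hpw
      rw [h1, h2]; ring
    · by_cases hww0 : w = w0
      · subst hww0; exact hw0neg
      · have h := hkey w0 w hpw0 hpw (Ne.symm hww0)
        have hprod : S u w * S v w < 0 := by
          have hv2 : S v w0 * S v w0 = 1 := by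
            rcases hvalv w0 hpw0 with h2 | h2 <;> rw [h2] <;> norm_num
          rw [hw0neg] at h
          nlinarith [h, hv2]
        exact sign_lemma_neg (hvalu w hpw) (hvalv w hpw) hprod
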